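/- Let E : A → P be a conditional expectation of finite index with the Rohlin property, with Rohlin projection e ∈ A_∞. Then for every x ∈ A^∞ there exists a unique y ∈ P^∞ such that x e = y e; explicitly y = (Index E) E^∞(x e). -/

import Mathlib

/-- A finite-index inclusion `P ⊆ A` of unital C*-algebras together with its
C*-basic construction, all realized inside one ambient C*-algebra `B = C*⟨A, e_P⟩`:
`E : A → P` is a conditional expectation of finite Watatani index `ind`
(a central, positive, invertible element, with inverse `indInv`), `eP` is the Jones
projection (`e_P a e_P = E(a) e_P`, `B` is the linear span of `A e_P A`), and
`Ehat` is the (faithful) dual conditional expectation `Ê : B → A`,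
`Ê(x e_P y) = (Index E)⁻¹ x y`. -/
structure WatataniSetup (B : Type*) [NormedRing B] [StarRing B] [CStarRing B]
    [NormedAlgebra ℂ B] [CompleteSpace B] [StarModule ℂ B] [PartialOrder B]
    [StarOrderedRing B] where
  A : StarSubalgebra ℂ B
  P : StarSubalgebra ℂ B
  le : P ≤ A
  E : B → B
  eP : B
  Ehat : B → B
  ind : B
  indInv : B
  ind_mem : ind ∈ P
  ind_central : ∀ b : B, Commute ind b
  ind_pos : 0 ≤ ind
  ind_mul_inv : ind * indInv = 1
  inv_mul_ind : indInv * ind = 1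
  -- `E` is a conditional expectation from `A` onto `P`
  E_add : ∀ x y : B, E (x + y) = E x + E y
  E_smul : ∀ (c : ℂ) (x : B), E (c • x) = c • E x
  E_mem : ∀ x ∈ A, E x ∈ P
  E_fix : ∀ x ∈ P, E x = x
  E_bimod : ∀ p ∈ P, ∀ q ∈ P, ∀ x : B, E (p * x * q) = p * E x * q
  E_star : ∀ x : B, E (star x) = star (E x)
  E_pos : ∀ x : B, 0 ≤ E (star x * x)
  E_faithful : ∀ x ∈ A, E (star x * x) = 0 → x = 0
  -- the Jones projection
  eP_idem : eP * eP = eP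
  eP_star : star eP = eP
  eP_conj : ∀ a ∈ A, eP * a * eP = E a * eP
  eP_comm : ∀ p ∈ P, Commute eP p
  eP_inj : ∀ p ∈ P, p * eP = 0 → p = 0
  -- `B` is the basic construction: the linear span of `A e_P A`
  span : ∀ z : B, ∃ (n : ℕ) (x y : Fin n → B),
    (∀ i, x i ∈ A) ∧ (∀ i, y i ∈ A) ∧ z = ∑ i, x i * eP * y i
  -- the dual conditional expectation `Ê : B → A`
  Ehat_add : ∀ x y : B, Ehat (x + y) = Ehat x + Ehat y
  Ehat_smul : ∀ (c : ℂ) (x : B), Ehat (c • x) = c • Ehat x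
  Ehat_mem : ∀ x : B, Ehat x ∈ A
  Ehat_fix : ∀ x ∈ A, Ehat x = x
  Ehat_bimod : ∀ p ∈ A, ∀ q ∈ A, ∀ x : B, Ehat (p * x * q) = p * Ehat x * q
  Ehat_star : ∀ x : B, Ehat (star x) = star (Ehat x)
  Ehat_pos : ∀ x : B, 0 ≤ Ehat (star x * x)
  Ehat_faithful : ∀ x : B, Ehat (star x * x) = 0 → x = 0
  Ehat_eP : ∀ x ∈ A, ∀ y ∈ A, Ehat (x * eP * y) = indInv * (x * y)


/-- A sequence `(a n)` in a normed space is bounded. -/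
def IsBddSeq {A : Type*} [Norm A] (a : ℕ → A) : Prop := ∃ C : ℝ, ∀ n, ‖a n‖ ≤ C

/-- Data exhibiting the algebra `Ainf` as the quotient `A^∞ = ℓ^∞(ℕ, A)/c₀(A)` of
bounded sequences in `A` modulo null sequences; `q` is the quotient map (its values
on unbounded sequences are irrelevant). -/
structure SeqAlg (A : Type*) [NormedRing A] [StarRing A] [NormedAlgebra ℂ A]
    (Ainf : Type*) [Ring Ainf] [StarRing Ainf] [Algebra ℂ Ainf] where
  q : (ℕ → A) → Ainf
  surj : ∀ z : Ainf, ∃ a : ℕ → A, IsBddSeq a ∧ q a = z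
  q_add : ∀ a b : ℕ → A, IsBddSeq a → IsBddSeq b → q (a + b) = q a + q b
  q_mul : ∀ a b : ℕ → A, IsBddSeq a → IsBddSeq b → q (a * b) = q a * q b
  q_smul : ∀ (c : ℂ) (a : ℕ → A), IsBddSeq a → q (c • a) = c • q a
  q_star : ∀ a : ℕ → A, IsBddSeq a → q (star a) = star (q a)
  q_one : q 1 = 1
  q_eq_zero_iff : ∀ a : ℕ → A, IsBddSeq a →
    (q a = 0 ↔ Filter.Tendsto (fun n => ‖a n‖) Filter.atTop (nhds 0))

/-- The canonical embedding of `A` into `Ainf` as (classes of) constant sequences. -/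
def SeqAlg.incl {A : Type*} [NormedRing A] [StarRing A] [NormedAlgebra ℂ A]
    {Ainf : Type*} [Ring Ainf] [StarRing Ainf] [Algebra ℂ Ainf]
    (S : SeqAlg A Ainf) (x : A) : Ainf := S.q fun _ => x

/-- The subalgebra `C^∞ ⊆ B^∞` of elements represented by bounded sequences from a
subset `C ⊆ B`. -/
def SeqAlg.subAlg {B : Type*} [NormedRing B] [StarRing B] [NormedAlgebra ℂ B]
    {Binf : Type*} [Ring Binf] [StarRing Binf] [Algebra ℂ Binf]
    (T : SeqAlg B Binf) (C : Set B) : Set Binf :=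
  {z | ∃ a : ℕ → B, IsBddSeq a ∧ (∀ n, a n ∈ C) ∧ T.q a = z}


section Aux

variable {B : Type*} [NormedRing B] [StarRing B] [CStarRing B]
    [NormedAlgebra ℂ B] [CompleteSpace B] [StarModule ℂ B] [PartialOrder B]
    [StarOrderedRing B]

private noncomputable abbrev cstarAlgebraOfParts : CStarAlgebra B :=
  { ‹NormedRing B›, ‹StarRing B›, ‹CStarRing B›, ‹CompleteSpace B›,
    ‹NormedAlgebra ℂ B›, ‹StarModule ℂ B› with }

attribute [local instance] cstarAlgebraOfParts

private lemma norm_one_le' : ‖(1 : B)‖ ≤ 1 := by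
  have h : ‖star (1:B) * 1‖ = ‖(1:B)‖ * ‖(1:B)‖ := CStarRing.norm_star_mul_self
  rw [star_one, one_mul] at h
  nlinarith [norm_nonneg (1 : B)]

private lemma real_smul_one (r : ℝ) : algebraMap ℝ B r = (r : ℂ) • (1 : B) := by
  rw [IsScalarTower.algebraMap_apply ℝ ℂ B, Algebra.algebraMap_eq_smul_one]
  norm_num

/-- real scalar multiples of nonneg elements are nonneg -/
private lemma rsmul_nonneg {r : ℝ} (hr : 0 ≤ r) {x : B} (hx : 0 ≤ x) :
    0 ≤ (r : ℂ) • x := by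
  rw [StarOrderedRing.nonneg_iff] at hx
  induction hx using AddSubmonoid.closure_induction with
  | mem z hz =>
      obtain ⟨s, rfl⟩ := hz
      have : (r : ℂ) • (star s * s) = star ((Real.sqrt r : ℂ) • s) * ((Real.sqrt r : ℂ) • s) := by
        rw [star_smul, smul_mul_smul_comm]
        congr 1
        rw [Complex.star_def, Complex.conj_ofReal, ← Complex.ofReal_mul,
          Real.mul_self_sqrt hr]
      rw [this]
      exact star_mul_self_nonneg _
  | zero => simp
  | add a b _ _ ha hb => rw [smul_add]; exact add_nonneg ha hb

private lemma rsmul_mono {r : ℝ} (hr : 0 ≤ r) {x y : B} (h : x ≤ y) :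
    (r : ℂ) • x ≤ (r : ℂ) • y := by
  have := rsmul_nonneg (B := B) hr (sub_nonneg.mpr h)
  rw [smul_sub] at this
  exact sub_nonneg.mp this


section PosMap

variable (Phi : B → B)
  (hadd : ∀ x y : B, Phi (x + y) = Phi x + Phi y)
  (hsmul : ∀ (c : ℂ) (x : B), Phi (c • x) = c • Phi x)
  (hstar : ∀ x : B, Phi (star x) = star (Phi x))
  (hpos : ∀ x : B, 0 ≤ Phi (star x * x))

include hsmul in
private lemma phi_zero : Phi 0 = 0 := by simpa using hsmul 0 0

include hsmul in
private lemma phi_neg (x : B) : Phi (-x) = -(Phi x) := by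
  simpa using hsmul (-1) x

include hadd hsmul in
private lemma phi_sub (x y : B) : Phi (x - y) = Phi x - Phi y := by
  rw [sub_eq_add_neg, hadd, phi_neg Phi hsmul, ← sub_eq_add_neg]

include hpos hsmul hadd in
private lemma phi_nonneg {x : B} (hx : 0 ≤ x) : 0 ≤ Phi x := by
  rw [StarOrderedRing.nonneg_iff] at hx
  induction hx using AddSubmonoid.closure_induction with
  | mem z hz => obtain ⟨s, rfl⟩ := hz; exact hpos s
  | zero => rw [phi_zero Phi hsmul]
  | add a b _ _ ha hb => rw [hadd]; exact add_nonneg ha hb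

include hpos hsmul hadd in
private lemma phi_mono {x y : B} (h : x ≤ y) : Phi x ≤ Phi y := by
  have h0 : 0 ≤ Phi (y - x) :=
    phi_nonneg Phi hadd hsmul hpos (sub_nonneg.mpr h)
  rw [phi_sub Phi hadd hsmul] at h0
  exact sub_nonneg.mp h0

include hadd hsmul hpos in
private lemma phi_norm_le_sa (hone : Phi 1 = 1) {x : B} (hx : IsSelfAdjoint x) :
    ‖Phi x‖ ≤ 3 * ‖x‖ := by
  have halg : ∀ r : ℝ, Phi ((r : ℂ) • 1) = (r : ℂ) • 1 := by
    intro r; rw [hsmul, hone]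
  have h1 : x ≤ (‖x‖ : ℂ) • 1 := by
    have := hx.le_algebraMap_norm_self
    rwa [real_smul_one] at this
  have h2 : -((‖x‖ : ℂ) • (1:B)) ≤ x := by
    have := hx.neg_algebraMap_norm_le_self
    rwa [real_smul_one] at this
  have hm1 : Phi x ≤ (‖x‖ : ℂ) • 1 := by
    have := phi_mono Phi hadd hsmul hpos h1
    rwa [halg] at this
  have hm2 : -((‖x‖ : ℂ) • (1:B)) ≤ Phi x := by
    have := phi_mono Phi hadd hsmul hpos h2
    rwa [phi_neg Phi hsmul, halg] at this
  have hnn : 0 ≤ Phi x + (‖x‖ : ℂ) • 1 := by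
    have := sub_nonneg.mpr hm2
    rwa [sub_neg_eq_add] at this
  have hub : Phi x + (‖x‖ : ℂ) • 1 ≤ (‖x‖ : ℂ) • 1 + (‖x‖ : ℂ) • 1 :=
    add_le_add_left hm1 _
  have hnorm1 : ‖Phi x + (‖x‖ : ℂ) • (1:B)‖ ≤ ‖(‖x‖ : ℂ) • (1:B) + (‖x‖ : ℂ) • (1:B)‖ :=
    CStarAlgebra.norm_le_norm_of_nonneg_of_le hnn hub
  have hsm : ‖(‖x‖ : ℂ) • (1:B)‖ ≤ ‖x‖ := by
    rw [norm_smul]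
    calc ‖((‖x‖:ℝ) : ℂ)‖ * ‖(1:B)‖ ≤ ‖((‖x‖:ℝ) : ℂ)‖ * 1 := by
          exact mul_le_mul_of_nonneg_left norm_one_le' (norm_nonneg _)
      _ = ‖x‖ := by rw [mul_one, Complex.norm_real, Real.norm_eq_abs,
            abs_of_nonneg (norm_nonneg _)]
  calc ‖Phi x‖ = ‖(Phi x + (‖x‖ : ℂ) • 1) - (‖x‖ : ℂ) • (1:B)‖ := by
        rw [add_sub_cancel_right]
    _ ≤ ‖Phi x + (‖x‖ : ℂ) • (1:B)‖ + ‖(‖x‖ : ℂ) • (1:B)‖ := norm_sub_le _ _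
    _ ≤ (‖(‖x‖ : ℂ) • (1:B)‖ + ‖(‖x‖ : ℂ) • (1:B)‖) + ‖(‖x‖ : ℂ) • (1:B)‖ := by
        refine add_le_add_left (hnorm1.trans (norm_add_le _ _)) _
    _ ≤ ‖x‖ + ‖x‖ + ‖x‖ := by gcongr
    _ = 3 * ‖x‖ := by ring

include hadd hsmul hstar hpos in
private lemma phi_norm_le (hone : Phi 1 = 1) (x : B) : ‖Phi x‖ ≤ 6 * ‖x‖ := by
  set u := ((1:ℂ)/2) • (x + star x) with hu
  set v := (-(Complex.I)/2) • (x - star x) with hv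
  have hx : x = u + Complex.I • v := by
    rw [hu, hv, smul_smul, smul_sub, smul_add]
    have h1 : Complex.I * (-(Complex.I)/2) = 1/2 := by
      simp [Complex.ext_iff]; norm_num
    rw [h1]
    match_scalars <;> ring
  have s1 : star ((1:ℂ)/2) = ((1:ℂ)/2) := by
    simp [Complex.star_def, Complex.ext_iff]
  have s2 : star (-(Complex.I)/2) = ((Complex.I)/2 : ℂ) := by
    simp [Complex.star_def, Complex.ext_iff]
  have husa : IsSelfAdjoint u := by
    rw [hu]; rw [IsSelfAdjoint, star_smul, star_add, star_star, s1, add_comm]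
  have hvsa : IsSelfAdjoint v := by
    rw [hv]; rw [IsSelfAdjoint, star_smul, star_sub, star_star, s2]
    match_scalars <;> ring
  have hun : ‖u‖ ≤ ‖x‖ := by
    rw [hu]
    calc ‖((1:ℂ)/2) • (x + star x)‖ = (1/2) * ‖x + star x‖ := by
          rw [norm_smul]; norm_num
      _ ≤ (1/2) * (‖x‖ + ‖star x‖) := by
          have := norm_add_le x (star x); linarith
      _ = ‖x‖ := by rw [norm_star]; ring
  have hvn : ‖v‖ ≤ ‖x‖ := by
    rw [hv]
    calc ‖(-(Complex.I)/2) • (x - star x)‖ = (1/2) * ‖x - star x‖ := by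
          rw [norm_smul]; norm_num
      _ ≤ (1/2) * (‖x‖ + ‖star x‖) := by
          have := norm_sub_le x (star x); linarith
      _ = ‖x‖ := by rw [norm_star]; ring
  have : Phi x = Phi u + Complex.I • Phi v := by
    rw [hx, hadd, hsmul Complex.I v]
  rw [this]
  calc ‖Phi u + Complex.I • Phi v‖ ≤ ‖Phi u‖ + ‖Complex.I • Phi v‖ := norm_add_le _ _
    _ = ‖Phi u‖ + ‖Phi v‖ := by rw [norm_smul, Complex.norm_I, one_mul]
    _ ≤ 3 * ‖u‖ + 3 * ‖v‖ := by
        refine add_le_add (phi_norm_le_sa Phi hadd hsmul hpos hone husa)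
          (phi_norm_le_sa Phi hadd hsmul hpos hone hvsa)
    _ ≤ 3 * ‖x‖ + 3 * ‖x‖ := by gcongr
    _ = 6 * ‖x‖ := by ring


include hadd hsmul hstar hpos in
private lemma phi_cs (M : StarSubalgebra ℂ B)
    (hbimod : ∀ p ∈ M, ∀ q ∈ M, ∀ x : B, Phi (p * x * q) = p * Phi x * q)
    (v w : B) (hw : 0 ≤ w) (hcmem : Phi (v * w) ∈ M) :
    ‖Phi (v * w)‖ ^ 2 ≤ ‖Phi (v * w * star v)‖ * ‖Phi w‖ := by
  set r := CFC.sqrt w with hrdef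
  have hrnn : 0 ≤ r := CFC.sqrt_nonneg w
  have hrr : r * r = w := CFC.sqrt_mul_sqrt_self w hw
  have hrsa : star r = r := hrnn.isSelfAdjoint
  have hwsa : star w = w := hw.isSelfAdjoint
  set z1 := r * star v with hz1def
  have hz1s : star z1 = v * r := by rw [hz1def, star_mul, star_star, hrsa]
  have hz11 : star z1 * z1 = v * w * star v := by
    rw [hz1s, hz1def, mul_assoc v r, ← mul_assoc r r, hrr, ← mul_assoc]
  have hz12 : star z1 * r = v * w := by rw [hz1s, mul_assoc, hrr]
  have hz21 : star r * z1 = star (v * w) := by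
    rw [hrsa, hz1def, ← mul_assoc, hrr, star_mul, hwsa]
  set c := Phi (v * w) with hcdef
  set K := ‖Phi (v * w * star v)‖ with hKdef
  have hscc : 0 ≤ star c * c := star_mul_self_nonneg c
  have hM110 : 0 ≤ Phi (v * w * star v) := by rw [← hz11]; exact hpos z1
  have hM11K : Phi (v * w * star v) ≤ (K : ℂ) • 1 := by
    rw [← real_smul_one]
    exact hM110.isSelfAdjoint.le_algebraMap_norm_self
  have hconj : star c * Phi (v * w * star v) * c ≤ (K : ℂ) • (star c * c) := by
    have h1 := star_left_conjugate_le_conjugate hM11K c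
    rwa [mul_smul_comm, smul_mul_assoc, mul_one] at h1
  have key : ∀ t : ℝ,
      0 ≤ ((t*t : ℝ) : ℂ) • (star c * Phi (v * w * star v) * c)
        - ((2*t : ℝ) : ℂ) • (star c * c) + Phi w := by
    intro t
    set a := (-(t:ℂ)) • c with hadef
    have haM : a ∈ M := M.smul_mem hcmem _
    have hasM : star a ∈ M := star_mem haM
    have hastar : star a = (-(t:ℂ)) • star c := by
      rw [hadef, star_smul]
      congr 1
      simp [Complex.star_def, Complex.ext_iff]
    have hg := hpos (z1 * a + r)
    have hexp : star (z1 * a + r) * (z1 * a + r)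
        = star a * (star z1 * z1) * a + (star a * (star z1 * r) * 1
          + (1 * (star r * z1) * a + star r * r)) := by
      rw [star_add, star_mul]
      noncomm_ring
    rw [hexp, hadd, hadd, hadd] at hg
    rw [hbimod _ hasM _ haM, hbimod _ hasM _ M.one_mem, hbimod _ M.one_mem _ haM] at hg
    rw [hz11, hz12, hz21, hrsa, hrr, hstar] at hg
    have e1 : star a * Phi (v * w * star v) * a
        = ((t*t : ℝ) : ℂ) • (star c * Phi (v * w * star v) * c) := by
      rw [hastar, hadef, smul_mul_assoc, smul_mul_assoc, mul_smul_comm, smul_smul]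
      congr 1
      push_cast
      ring
    have e2 : star a * c * 1 = (-(t:ℂ)) • (star c * c) := by
      rw [mul_one, hastar, smul_mul_assoc]
    have e3 : (1 : B) * star c * a = (-(t:ℂ)) • (star c * c) := by
      rw [one_mul, hadef, mul_smul_comm]
    rw [e1, e2, e3] at hg
    have e4 : ((t*t : ℝ) : ℂ) • (star c * Phi (v * w * star v) * c)
        + ((-(t:ℂ)) • (star c * c) + ((-(t:ℂ)) • (star c * c) + Phi w))
        = ((t*t : ℝ) : ℂ) • (star c * Phi (v * w * star v) * c)
          - ((2*t : ℝ) : ℂ) • (star c * c) + Phi w := by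
      push_cast
      module
    rwa [e4] at hg
  have key2 : ∀ t : ℝ, 0 ≤ t → ((2*t - t*t*K : ℝ) : ℂ) • (star c * c) ≤ Phi w := by
    intro t ht
    have h1 := key t
    have h2 : ((t*t : ℝ) : ℂ) • (star c * Phi (v * w * star v) * c)
        ≤ ((t*t*K : ℝ) : ℂ) • (star c * c) := by
      have := rsmul_mono (mul_nonneg ht ht) hconj
      rwa [smul_smul, show ((t*t:ℝ):ℂ) * (K:ℂ) = ((t*t*K : ℝ):ℂ) by push_cast; ring]
        at this
    have h3 : 0 ≤ ((t*t*K : ℝ) : ℂ) • (star c * c)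
        - ((2*t : ℝ) : ℂ) • (star c * c) + Phi w := by
      have := add_le_add_left (sub_le_sub_right h2 (((2*t : ℝ) : ℂ) • (star c * c)))
        (Phi w)
      exact le_trans h1 this
    have h4 : ((t*t*K : ℝ) : ℂ) • (star c * c) - ((2*t : ℝ) : ℂ) • (star c * c)
        = -(((2*t - t*t*K : ℝ) : ℂ) • (star c * c)) := by
      push_cast
      module
    rw [h4, neg_add_eq_sub] at h3
    exact sub_nonneg.mp h3
  have hnormcc : ‖star c * c‖ = ‖c‖ ^ 2 := by
    rw [CStarRing.norm_star_mul_self, pow_two]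
  have key3 : ∀ t : ℝ, 0 ≤ t → (2*t - t*t*K) * ‖c‖^2 ≤ ‖Phi w‖ := by
    intro t ht
    rcases le_or_gt (2*t - t*t*K) 0 with hc0 | hc0
    · have : (2*t - t*t*K) * ‖c‖^2 ≤ 0 :=
        mul_nonpos_of_nonpos_of_nonneg hc0 (sq_nonneg _)
      exact this.trans (norm_nonneg _)
    · have hle := key2 t ht
      have hnn : 0 ≤ ((2*t - t*t*K : ℝ) : ℂ) • (star c * c) :=
        rsmul_nonneg hc0.le hscc
      have := CStarAlgebra.norm_le_norm_of_nonneg_of_le hnn hle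
      rw [norm_smul, Complex.norm_real, Real.norm_eq_abs, abs_of_pos hc0, hnormcc]
        at this
      exact this
  have hKnn : 0 ≤ K := norm_nonneg _
  rcases eq_or_lt_of_le hKnn with hK0 | hKpos
  · -- K = 0
    rcases eq_or_lt_of_le (sq_nonneg ‖c‖) with hc0 | hcpos
    · rw [← hK0, ← hc0]
      simp
    · exfalso
      set t0 := (‖Phi w‖ + 1) / (2 * ‖c‖^2) with ht0
      have ht0nn : 0 ≤ t0 := by positivity
      have h5 := key3 t0 ht0nn
      rw [← hK0] at h5
      have hne : (2 : ℝ) * ‖c‖^2 ≠ 0 := by positivity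
      have h6 : (2*t0 - t0*t0*0) * ‖c‖^2 = ‖Phi w‖ + 1 := by
        rw [ht0, mul_zero, sub_zero, mul_div_assoc', div_mul_eq_mul_div, div_eq_iff hne]; ring
      rw [h6] at h5
      linarith
  · have hkey := key3 (1/K) (by positivity)
    have he : 2*(1/K) - (1/K)*(1/K)*K = 1/K := by
      field_simp
      norm_num
    rw [he] at hkey
    have h8 := mul_le_mul_of_nonneg_left hkey hKnn
    have h9 : K * (1/K * ‖c‖^2) = ‖c‖^2 := by field_simp
    rw [h9] at h8
    linarith

include hadd hsmul hstar hpos in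
private lemma pp_of_qb (M : StarSubalgebra ℂ B)
    (hbimod : ∀ p ∈ M, ∀ q ∈ M, ∀ x : B, Phi (p * x * q) = p * Phi x * q)
    (Cond : B → Prop)
    (n : ℕ) (u v : Fin n → B)
    (hrep : ∀ w : B, Cond w → w = ∑ i, u i * Phi (v i * w))
    (hmem : ∀ w : B, Cond w → ∀ i, Phi (v i * w) ∈ M) :
    ∃ C : ℝ, 0 < C ∧ ∀ w : B, Cond w → 0 ≤ w → ‖w‖ ≤ C * ‖Phi w‖ := by
  set D := ∑ i, ‖u i‖ * Real.sqrt ‖Phi (v i * star (v i))‖ with hD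
  have hDnn : 0 ≤ D :=
    Finset.sum_nonneg fun i _ => mul_nonneg (norm_nonneg _) (Real.sqrt_nonneg _)
  refine ⟨D^2 + 1, by positivity, ?_⟩
  intro w hw hw0
  have hPw0 : 0 ≤ Phi w := phi_nonneg Phi hadd hsmul hpos hw0
  have hterm : ∀ i, ‖Phi (v i * w)‖
      ≤ Real.sqrt ‖Phi (v i * star (v i))‖ * Real.sqrt (‖w‖ * ‖Phi w‖) := by
    intro i
    have hcs := phi_cs Phi hadd hsmul hstar hpos M hbimod (v i) w hw0 (hmem w hw i)
    have h1 : w ≤ (‖w‖ : ℂ) • 1 := by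
      rw [← real_smul_one]
      exact hw0.isSelfAdjoint.le_algebraMap_norm_self
    have hb1 : v i * w * star (v i) ≤ (‖w‖ : ℂ) • (v i * star (v i)) := by
      have h2 := star_right_conjugate_le_conjugate h1 (v i)
      rwa [mul_smul_comm, smul_mul_assoc, mul_one] at h2
    have hb0 : 0 ≤ v i * w * star (v i) := star_right_conjugate_nonneg hw0 (v i)
    have hb2 : Phi (v i * w * star (v i)) ≤ (‖w‖:ℂ) • Phi (v i * star (v i)) := by
      have h3 := phi_mono Phi hadd hsmul hpos hb1
      rwa [hsmul] at h3
    have hb3 : ‖Phi (v i * w * star (v i))‖ ≤ ‖w‖ * ‖Phi (v i * star (v i))‖ := by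
      have hnn := phi_nonneg Phi hadd hsmul hpos hb0
      have h4 := CStarAlgebra.norm_le_norm_of_nonneg_of_le hnn hb2
      rwa [norm_smul, Complex.norm_real, Real.norm_eq_abs,
        abs_of_nonneg (norm_nonneg w)] at h4
    have h4 : ‖Phi (v i * w)‖^2 ≤ ‖Phi (v i * star (v i))‖ * (‖w‖ * ‖Phi w‖) := by
      nlinarith [norm_nonneg (Phi w)]
    have h5 : ‖Phi (v i * w)‖ ≤ Real.sqrt (‖Phi (v i * star (v i))‖ * (‖w‖ * ‖Phi w‖)) := by
      calc ‖Phi (v i * w)‖ = Real.sqrt (‖Phi (v i * w)‖^2) :=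
            (Real.sqrt_sq (norm_nonneg _)).symm
        _ ≤ _ := Real.sqrt_le_sqrt h4
    rwa [Real.sqrt_mul (norm_nonneg _)] at h5
  have hsum : ‖w‖ ≤ D * Real.sqrt (‖w‖ * ‖Phi w‖) := by
    calc ‖w‖ = ‖∑ i, u i * Phi (v i * w)‖ := by rw [← hrep w hw]
      _ ≤ ∑ i, ‖u i * Phi (v i * w)‖ := norm_sum_le _ _
      _ ≤ ∑ i, ‖u i‖ * (Real.sqrt ‖Phi (v i * star (v i))‖ * Real.sqrt (‖w‖ * ‖Phi w‖)) := by
          refine Finset.sum_le_sum fun i _ => ?_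
          exact (norm_mul_le _ _).trans
            (mul_le_mul_of_nonneg_left (hterm i) (norm_nonneg _))
      _ = D * Real.sqrt (‖w‖ * ‖Phi w‖) := by
          rw [hD, Finset.sum_mul]
          exact Finset.sum_congr rfl fun i _ => by ring
  rcases eq_or_lt_of_le (norm_nonneg w) with h0 | h0
  · rw [← h0]
    positivity
  · set s := Real.sqrt (‖w‖ * ‖Phi w‖) with hsdef
    have hs : s ^ 2 = ‖w‖ * ‖Phi w‖ :=
      Real.sq_sqrt (mul_nonneg (norm_nonneg _) (norm_nonneg _))
    have h1 : ‖w‖ * ‖w‖ ≤ (D * s) * (D * s) :=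
      mul_self_le_mul_self (norm_nonneg w) hsum
    have h2 : (D * s) * (D * s) = D^2 * (‖w‖ * ‖Phi w‖) := by
      rw [← hs]; ring
    have h3 : ‖w‖ * ‖w‖ ≤ ‖w‖ * (D^2 * ‖Phi w‖) := by
      rw [h2] at h1; linarith [h1]
    have h4 : ‖w‖ ≤ D^2 * ‖Phi w‖ := le_of_mul_le_mul_left h3 h0
    nlinarith [norm_nonneg (Phi w)]

end PosMap

end Aux

namespace WatataniSetup

variable {B : Type*} [NormedRing B] [StarRing B] [CStarRing B]
    [NormedAlgebra ℂ B] [CompleteSpace B] [StarModule ℂ B] [PartialOrder B]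
    [StarOrderedRing B] (S : WatataniSetup B)

private lemma indInv_comm (b : B) : S.indInv * b = b * S.indInv := by
  have h : S.indInv * (b * (S.ind * S.indInv)) = b * S.indInv := by
    rw [← mul_assoc b, ← (S.ind_central b).eq, mul_assoc, ← mul_assoc,
      S.inv_mul_ind, one_mul]
  calc S.indInv * b = S.indInv * (b * (S.ind * S.indInv)) := by
        rw [S.ind_mul_inv, mul_one]
    _ = b * S.indInv := h

private lemma ind_cancel (z : B) : S.ind * (S.indInv * z) = z := by
  rw [← mul_assoc, S.ind_mul_inv, one_mul]

private lemma indInv_cancel (z : B) : S.indInv * (S.ind * z) = z := by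
  rw [← mul_assoc, S.inv_mul_ind, one_mul]

private lemma star_ind : star S.ind = S.ind := S.ind_pos.isSelfAdjoint

private lemma star_indInv : star S.indInv = S.indInv := by
  have h1 : star S.indInv * S.ind = 1 := by
    rw [← S.star_ind, ← star_mul, S.ind_mul_inv, star_one]
  calc star S.indInv = star S.indInv * (S.ind * S.indInv) := by
        rw [S.ind_mul_inv, mul_one]
    _ = S.indInv := by rw [← mul_assoc, h1, one_mul]

private lemma E_one : S.E 1 = 1 := S.E_fix 1 S.P.one_mem

private lemma Ehat_one : S.Ehat 1 = 1 := S.Ehat_fix 1 S.A.one_mem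

private lemma E_norm (x : B) : ‖S.E x‖ ≤ 6 * ‖x‖ :=
  phi_norm_le S.E S.E_add S.E_smul S.E_star S.E_pos S.E_one x

private lemma Ehat_norm (x : B) : ‖S.Ehat x‖ ≤ 6 * ‖x‖ :=
  phi_norm_le S.Ehat S.Ehat_add S.Ehat_smul S.Ehat_star S.Ehat_pos S.Ehat_one x

private lemma E_p_mul {p : B} (hp : p ∈ S.P) (x : B) : S.E (p * x) = p * S.E x := by
  have h := S.E_bimod p hp 1 S.P.one_mem x
  rwa [mul_one, mul_one] at h

private lemma Ehat_a_mul {p : B} (hp : p ∈ S.A) (x : B) :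
    S.Ehat (p * x) = p * S.Ehat x := by
  have h := S.Ehat_bimod p hp 1 S.A.one_mem x
  rwa [mul_one, mul_one] at h

private def EhatHom : B →+ B := AddMonoidHom.mk' S.Ehat S.Ehat_add

/-- quasi-basis package: a family realizing both the quasi-basis identity for `E`
and the dual quasi-basis identity for `Ehat`. -/
private lemma indInv_mul_move (a w : B) : a * (S.indInv * w) = S.indInv * (a * w) := by
  rw [← mul_assoc, ← S.indInv_comm, mul_assoc]

/-- quasi-basis package: a family realizing both the quasi-basis identity for `E`
and the dual quasi-basis identity for `Ehat`. -/
private lemma qb : ∃ (n : ℕ) (x y : Fin n → B),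
    (∀ i, x i ∈ S.A) ∧ (∀ i, y i ∈ S.A) ∧
    (∀ a ∈ S.A, a = ∑ i, x i * S.E (y i * a)) ∧
    (∀ z : B, z = ∑ i, (S.ind * x i * S.eP) * S.Ehat ((S.eP * y i) * z)) := by
  obtain ⟨n, x, y, hx, hy, hone⟩ := S.span 1
  have hqbE : ∀ a ∈ S.A, a = ∑ i, x i * S.E (y i * a) := by
    intro a ha
    have h1 : a * S.eP = ∑ i, (x i * S.E (y i * a)) * S.eP := by
      calc a * S.eP = (1 : B) * (a * S.eP) := (one_mul _).symm
        _ = (∑ i, x i * S.eP * y i) * (a * S.eP) := by rw [← hone]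
        _ = ∑ i, x i * S.eP * y i * (a * S.eP) := Finset.sum_mul _ _ _
        _ = ∑ i, (x i * S.E (y i * a)) * S.eP := by
            refine Finset.sum_congr rfl fun i _ => ?_
            have h2 : S.eP * (y i * a) * S.eP = S.E (y i * a) * S.eP :=
              S.eP_conj _ (S.A.mul_mem (hy i) ha)
            calc x i * S.eP * y i * (a * S.eP)
                = x i * (S.eP * (y i * a) * S.eP) := by noncomm_ring
              _ = x i * (S.E (y i * a) * S.eP) := by rw [h2]
              _ = (x i * S.E (y i * a)) * S.eP := by noncomm_ring
    have h3 := congrArg S.EhatHom h1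
    simp only [EhatHom, AddMonoidHom.mk'_apply, map_sum] at h3
    have h4 : S.Ehat (a * S.eP) = S.indInv * a := by
      have := S.Ehat_eP a ha 1 S.A.one_mem
      rwa [mul_one, mul_one] at this
    have h5 : ∀ i, S.Ehat ((x i * S.E (y i * a)) * S.eP)
        = S.indInv * (x i * S.E (y i * a)) := by
      intro i
      have hmem : x i * S.E (y i * a) ∈ S.A :=
        S.A.mul_mem (hx i) (S.le (S.E_mem _ (S.A.mul_mem (hy i) ha)))
      have := S.Ehat_eP _ hmem 1 S.A.one_mem
      rwa [mul_one, mul_one] at this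
    rw [h4] at h3
    simp only [h5] at h3
    rw [← Finset.mul_sum] at h3
    calc a = S.ind * (S.indInv * a) := (S.ind_cancel a).symm
      _ = S.ind * (S.indInv * ∑ i, x i * S.E (y i * a)) := by rw [h3]
      _ = ∑ i, x i * S.E (y i * a) := S.ind_cancel _
  refine ⟨n, x, y, hx, hy, hqbE, ?_⟩
  intro z
  have hLadd : ∀ z1 z2 : B,
      (∑ i, (S.ind * x i * S.eP) * S.Ehat ((S.eP * y i) * (z1 + z2)))
      = (∑ i, (S.ind * x i * S.eP) * S.Ehat ((S.eP * y i) * z1))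
        + (∑ i, (S.ind * x i * S.eP) * S.Ehat ((S.eP * y i) * z2)) := by
    intro z1 z2
    rw [← Finset.sum_add_distrib]
    refine Finset.sum_congr rfl fun i _ => ?_
    rw [mul_add, S.Ehat_add, mul_add]
  set LH : B →+ B :=
    AddMonoidHom.mk' (fun z => ∑ i, (S.ind * x i * S.eP) * S.Ehat ((S.eP * y i) * z))
      hLadd with hLH
  have hsingle : ∀ (u v0 : B), u ∈ S.A → v0 ∈ S.A →
      LH (u * S.eP * v0) = u * S.eP * v0 := by
    intro u v0 hu hv0
    have hterm : ∀ i : Fin n, (S.ind * x i * S.eP) * S.Ehat ((S.eP * y i) * (u * S.eP * v0))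
        = (x i * S.E (y i * u)) * (S.eP * v0) := by
      intro i
      have hmemE : S.E (y i * u) ∈ S.A := S.le (S.E_mem _ (S.A.mul_mem (hy i) hu))
      have h2 : S.eP * (y i * u) * S.eP = S.E (y i * u) * S.eP :=
        S.eP_conj _ (S.A.mul_mem (hy i) hu)
      have h1 : (S.eP * y i) * (u * S.eP * v0) = S.E (y i * u) * S.eP * v0 := by
        calc (S.eP * y i) * (u * S.eP * v0) = (S.eP * (y i * u) * S.eP) * v0 := by
              noncomm_ring
          _ = (S.E (y i * u) * S.eP) * v0 := by rw [h2]
      have h3 : S.Ehat (S.E (y i * u) * S.eP * v0) = S.indInv * (S.E (y i * u) * v0) :=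
        S.Ehat_eP _ hmemE v0 hv0
      rw [h1, h3]
      have hcomm : S.eP * S.E (y i * u) = S.E (y i * u) * S.eP :=
        (S.eP_comm _ (S.E_mem _ (S.A.mul_mem (hy i) hu))).eq
      calc (S.ind * x i * S.eP) * (S.indInv * (S.E (y i * u) * v0))
          = S.indInv * (S.ind * (x i * (S.eP * (S.E (y i * u) * v0)))) := by
            rw [S.indInv_mul_move]
            noncomm_ring
        _ = x i * (S.eP * (S.E (y i * u) * v0)) := S.indInv_cancel _
        _ = x i * (S.E (y i * u) * (S.eP * v0)) := by
            rw [← mul_assoc S.eP, hcomm, mul_assoc]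
        _ = (x i * S.E (y i * u)) * (S.eP * v0) := by noncomm_ring
    have hLHval : LH (u * S.eP * v0)
        = ∑ i, (S.ind * x i * S.eP) * S.Ehat ((S.eP * y i) * (u * S.eP * v0)) := rfl
    rw [hLHval]
    simp only [hterm]
    rw [← Finset.sum_mul, ← hqbE u hu, mul_assoc]
  obtain ⟨m, u2, v2, hu2, hv2, hz⟩ := S.span z
  have : LH z = z := by
    rw [hz, map_sum]
    exact Finset.sum_congr rfl fun j _ => hsingle _ _ (hu2 j) (hv2 j)
  exact this.symm

private lemma pp_Ehat : ∃ C : ℝ, 0 < C ∧ ∀ w : B, 0 ≤ w → ‖w‖ ≤ C * ‖S.Ehat w‖ := by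
  obtain ⟨n, x, y, hx, hy, _, hdual⟩ := S.qb
  obtain ⟨C, hC, h⟩ := pp_of_qb S.Ehat S.Ehat_add S.Ehat_smul S.Ehat_star S.Ehat_pos
    S.A S.Ehat_bimod (fun _ => True) n (fun i => S.ind * x i * S.eP)
    (fun i => S.eP * y i) (fun w _ => hdual w) (fun w _ i => S.Ehat_mem _)
  exact ⟨C, hC, fun w hw => h w trivial hw⟩

private lemma pp_E : ∃ C : ℝ, 0 < C ∧ ∀ w : B, w ∈ S.A → 0 ≤ w → ‖w‖ ≤ C * ‖S.E w‖ := by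
  obtain ⟨n, x, y, hx, hy, hqbE, _⟩ := S.qb
  exact pp_of_qb S.E S.E_add S.E_smul S.E_star S.E_pos
    S.P S.E_bimod (· ∈ S.A) n x y (fun w hw => hqbE w hw)
    (fun w hw i => S.E_mem _ (S.A.mul_mem (hy i) hw))

end WatataniSetup


section SeqHelpers

variable {A : Type*} [NormedRing A] [StarRing A] [CStarRing A] [NormedAlgebra ℂ A]

private lemma bdd_const (x : A) : IsBddSeq (fun _ => x) := ⟨‖x‖, fun _ => le_rfl⟩

private lemma bdd_nn {a : ℕ → A} (h : IsBddSeq a) : ∃ C, 0 ≤ C ∧ ∀ n, ‖a n‖ ≤ C := by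
  obtain ⟨C, hC⟩ := h
  exact ⟨max C 0, le_max_right _ _, fun n => (hC n).trans (le_max_left _ _)⟩

private lemma bdd_add {a b : ℕ → A} (ha : IsBddSeq a) (hb : IsBddSeq b) :
    IsBddSeq (fun n => a n + b n) := by
  obtain ⟨C, _, hC⟩ := bdd_nn ha
  obtain ⟨D, _, hD⟩ := bdd_nn hb
  exact ⟨C + D, fun n => (norm_add_le _ _).trans (add_le_add (hC n) (hD n))⟩

private lemma bdd_sub {a b : ℕ → A} (ha : IsBddSeq a) (hb : IsBddSeq b) :
    IsBddSeq (fun n => a n - b n) := by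
  obtain ⟨C, _, hC⟩ := bdd_nn ha
  obtain ⟨D, _, hD⟩ := bdd_nn hb
  exact ⟨C + D, fun n => (norm_sub_le _ _).trans (add_le_add (hC n) (hD n))⟩

private lemma bdd_mul {a b : ℕ → A} (ha : IsBddSeq a) (hb : IsBddSeq b) :
    IsBddSeq (fun n => a n * b n) := by
  obtain ⟨C, hC0, hC⟩ := bdd_nn ha
  obtain ⟨D, hD0, hD⟩ := bdd_nn hb
  refine ⟨C * D, fun n => (norm_mul_le _ _).trans ?_⟩
  exact mul_le_mul (hC n) (hD n) (norm_nonneg _) hC0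

private lemma bdd_star {a : ℕ → A} (ha : IsBddSeq a) :
    IsBddSeq (fun n => star (a n)) := by
  obtain ⟨C, hC⟩ := ha
  exact ⟨C, fun n => by rw [norm_star]; exact hC n⟩

private lemma bdd_comp6 {f : A → A} (hf : ∀ x, ‖f x‖ ≤ 6 * ‖x‖) {a : ℕ → A}
    (ha : IsBddSeq a) : IsBddSeq (fun n => f (a n)) := by
  obtain ⟨C, _, hC⟩ := bdd_nn ha
  exact ⟨6 * C, fun n => (hf (a n)).trans (by linarith [hC n])⟩

end SeqHelpers

namespace SeqAlg

variable {A : Type*} [NormedRing A] [StarRing A] [CStarRing A] [NormedAlgebra ℂ A]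
    {Ainf : Type*} [Ring Ainf] [StarRing Ainf] [Algebra ℂ Ainf]
    (T : SeqAlg A Ainf)

private lemma q_mul' {u v : ℕ → A} (hu : IsBddSeq u) (hv : IsBddSeq v) :
    T.q u * T.q v = T.q (fun n => u n * v n) := by
  rw [← T.q_mul u v hu hv]
  rfl

private lemma q_sub' {u v : ℕ → A} (hu : IsBddSeq u) (hv : IsBddSeq v) :
    T.q (fun n => u n - v n) = T.q u - T.q v := by
  have hsub : IsBddSeq (fun n => u n - v n) := bdd_sub hu hv
  have h := T.q_add (fun n => u n - v n) v hsub hv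
  have h2 : ((fun n => u n - v n) + v) = u := by funext n; simp
  rw [h2] at h
  rw [eq_sub_iff_add_eq, ← h]

private lemma q_star' {u : ℕ → A} (hu : IsBddSeq u) :
    star (T.q u) = T.q (fun n => star (u n)) := by
  rw [← T.q_star u hu]
  rfl

private lemma incl_mul (x y : A) : T.incl x * T.incl y = T.incl (x * y) := by
  rw [SeqAlg.incl, SeqAlg.incl, SeqAlg.incl, q_mul' T (bdd_const x) (bdd_const y)]

private lemma incl_star (x : A) : star (T.incl x) = T.incl (star x) := by
  rw [SeqAlg.incl, SeqAlg.incl, q_star' T (bdd_const x)]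

private lemma incl_one : T.incl 1 = 1 := T.q_one

private lemma central_incl (c : A) (hc : ∀ b : A, c * b = b * c) (z : Ainf) :
    T.incl c * z = z * T.incl c := by
  obtain ⟨u, hu, rfl⟩ := T.surj z
  rw [SeqAlg.incl, q_mul' T (bdd_const c) hu, q_mul' T hu (bdd_const c)]
  congr 1
  funext n
  exact hc (u n)

private lemma tendsto_of_q_eq {u v : ℕ → A} (hu : IsBddSeq u) (hv : IsBddSeq v)
    (h : T.q u = T.q v) :
    Filter.Tendsto (fun n => ‖u n - v n‖) Filter.atTop (nhds 0) := by
  have hsub : T.q (fun n => u n - v n) = 0 := by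
    rw [q_sub' T hu hv, h, sub_self]
  exact (T.q_eq_zero_iff _ (bdd_sub hu hv)).mp hsub

private lemma q_eq_zero_of_tendsto {u : ℕ → A} (hu : IsBddSeq u)
    (h : Filter.Tendsto (fun n => ‖u n‖) Filter.atTop (nhds 0)) : T.q u = 0 :=
  (T.q_eq_zero_iff u hu).mpr h

end SeqAlg

/-- if `E` has the Rohlin property with Rohlin projection `e ∈ A_∞`,
then for every `x ∈ A^∞` there is a unique `y ∈ P^∞` with `x e = y e`; explicitly
`y = (Index E) E^∞(x e)`. -/
theorem rohlin_compression_unique_element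
    {B : Type*} [NormedRing B] [StarRing B] [CStarRing B] [NormedAlgebra ℂ B]
    [CompleteSpace B] [StarModule ℂ B] [PartialOrder B] [StarOrderedRing B]
    (S : WatataniSetup B)
    {Binf : Type*} [Ring Binf] [StarRing Binf] [Algebra ℂ Binf] (T : SeqAlg B Binf)
    (Einf : Binf → Binf)
    (hEinf : ∀ a : ℕ → B, IsBddSeq a → Einf (T.q a) = T.q fun n => S.E (a n))
    -- the Rohlin projection `e ∈ A_∞`
    (e : Binf) (he_rep : ∃ a : ℕ → B, IsBddSeq a ∧ (∀ n, a n ∈ S.A) ∧ T.q a = e)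
    (he_idem : e * e = e) (he_star : star e = e)
    (he_comm : ∀ x ∈ S.A, Commute e (T.incl x))
    (he_exp : Einf e = T.incl S.indInv)
    (he_inj : ∀ x ∈ S.A, T.incl x * e = 0 → x = 0) :
    ∀ x ∈ T.subAlg (S.A : Set B),
      (T.incl S.ind * Einf (x * e)) ∈ T.subAlg (S.P : Set B) ∧
      x * e = (T.incl S.ind * Einf (x * e)) * e ∧
      ∀ y ∈ T.subAlg (S.P : Set B), x * e = y * e →
        y = T.incl S.ind * Einf (x * e) := by
  classical
  obtain ⟨b, hbB, hbA0, hqb⟩ := he_rep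
  have hbA : ∀ n, b n ∈ S.A := hbA0
  obtain ⟨CE, hCE0, hppE⟩ := S.pp_E
  obtain ⟨CH, hCH0, hppH⟩ := S.pp_Ehat
  have hEsub : ∀ x y : B, S.E (x - y) = S.E x - S.E y :=
    phi_sub S.E S.E_add S.E_smul
  have hHsub : ∀ x y : B, S.Ehat (x - y) = S.Ehat x - S.Ehat y :=
    phi_sub S.Ehat S.Ehat_add S.Ehat_smul
  have hcind : ∀ z : Binf, T.incl S.ind * z = z * T.incl S.ind :=
    T.central_incl S.ind (fun b' => (S.ind_central b').eq)
  have hcinv : ∀ z : Binf, T.incl S.indInv * z = z * T.incl S.indInv :=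
    T.central_incl S.indInv S.indInv_comm
  have hsteP : star (T.incl S.eP) = T.incl S.eP := by rw [T.incl_star, S.eP_star]
  have hstind : star (T.incl S.ind) = T.incl S.ind := by rw [T.incl_star, S.star_ind]
  have hii1 : T.incl S.ind * T.incl S.indInv = 1 := by
    rw [T.incl_mul, S.ind_mul_inv, T.incl_one]
  have hii2 : T.incl S.indInv * T.incl S.ind = 1 := by
    rw [T.incl_mul, S.inv_mul_ind, T.incl_one]
  have hbEB : IsBddSeq (fun n => S.E (b n)) := bdd_comp6 S.E_norm hbB
  have hqEb : T.q (fun n => S.E (b n)) = T.incl S.indInv := by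
    have h := hEinf b hbB
    rw [hqb, he_exp] at h
    exact h.symm
  -- the identity `e_P e e_P = (Index E)⁻¹ e_P` in `B^∞`
  have hePeB : IsBddSeq (fun n => S.eP * b n) := bdd_mul (bdd_const _) hbB
  have heq1 : T.incl S.eP * e = T.q (fun n => S.eP * b n) := by
    rw [← hqb, SeqAlg.incl, T.q_mul' (bdd_const _) hbB]
  have hI1 : T.incl S.eP * e * T.incl S.eP = T.incl S.indInv * T.incl S.eP := by
    rw [heq1, SeqAlg.incl, T.q_mul' hePeB (bdd_const _)]
    have hfun : (fun n => (S.eP * b n) * S.eP) = fun n => S.E (b n) * S.eP := by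
      funext n; exact S.eP_conj (b n) (hbA n)
    rw [hfun, ← T.q_mul' hbEB (bdd_const _), hqEb]
  -- `t = e e_P e`
  have htB : IsBddSeq (fun n => b n * S.eP * b n) :=
    bdd_mul (bdd_mul hbB (bdd_const _)) hbB
  have ht : e * T.incl S.eP * e = T.q (fun n => b n * S.eP * b n) := by
    rw [← hqb, SeqAlg.incl, T.q_mul' hbB (bdd_const _),
      T.q_mul' (bdd_mul hbB (bdd_const _)) hbB]
  have htt : (e * T.incl S.eP * e) * (e * T.incl S.eP * e)
      = T.incl S.indInv * (e * T.incl S.eP * e) := by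
    calc (e * T.incl S.eP * e) * (e * T.incl S.eP * e)
        = e * T.incl S.eP * (e * e) * T.incl S.eP * e := by noncomm_ring
      _ = e * (T.incl S.eP * e * T.incl S.eP) * e := by rw [he_idem]; noncomm_ring
      _ = e * (T.incl S.indInv * T.incl S.eP) * e := by rw [hI1]
      _ = (e * T.incl S.indInv) * T.incl S.eP * e := by noncomm_ring
      _ = (T.incl S.indInv * e) * T.incl S.eP * e := by rw [← hcinv e]
      _ = T.incl S.indInv * (e * T.incl S.eP * e) := by noncomm_ring
  have het : e * (e * T.incl S.eP * e) = e * T.incl S.eP * e := by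
    calc e * (e * T.incl S.eP * e) = (e * e) * T.incl S.eP * e := by noncomm_ring
      _ = e * T.incl S.eP * e := by rw [he_idem]
  have hte : (e * T.incl S.eP * e) * e = e * T.incl S.eP * e := by
    calc (e * T.incl S.eP * e) * e = e * T.incl S.eP * (e * e) := by noncomm_ring
      _ = e * T.incl S.eP * e := by rw [he_idem]
  set pseq : ℕ → B := fun n => b n - S.ind * (b n * S.eP * b n) with hpseq
  have hpB : IsBddSeq pseq := bdd_sub hbB (bdd_mul (bdd_const _) htB)
  have hqp : T.q pseq = e - T.incl S.ind * (e * T.incl S.eP * e) := by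
    calc T.q pseq
        = T.q b - T.q (fun n => S.ind * (b n * S.eP * b n)) :=
          T.q_sub' hbB (bdd_mul (bdd_const _) htB)
      _ = e - T.incl S.ind * (e * T.incl S.eP * e) := by
          rw [hqb]
          congr 1
          rw [ht]
          exact (T.q_mul' (bdd_const _) htB).symm
  have hstt : star (e * T.incl S.eP * e) = e * T.incl S.eP * e := by
    simp only [star_mul, he_star, hsteP]
    noncomm_ring
  have hp_star : star (e - T.incl S.ind * (e * T.incl S.eP * e))
      = e - T.incl S.ind * (e * T.incl S.eP * e) := by
    rw [star_sub, he_star, star_mul, hstind, hstt, ← hcind (e * T.incl S.eP * e)]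
  have hp_idem : (e - T.incl S.ind * (e * T.incl S.eP * e))
      * (e - T.incl S.ind * (e * T.incl S.eP * e))
      = e - T.incl S.ind * (e * T.incl S.eP * e) := by
    have expand : (e - T.incl S.ind * (e * T.incl S.eP * e))
        * (e - T.incl S.ind * (e * T.incl S.eP * e))
        = e * e - e * (T.incl S.ind * (e * T.incl S.eP * e))
          - (T.incl S.ind * (e * T.incl S.eP * e)) * e
          + (T.incl S.ind * (e * T.incl S.eP * e))
            * (T.incl S.ind * (e * T.incl S.eP * e)) := by noncomm_ring
    have h1 : e * (T.incl S.ind * (e * T.incl S.eP * e))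
        = T.incl S.ind * (e * T.incl S.eP * e) := by
      rw [← mul_assoc, ← hcind e, mul_assoc, het]
    have h2 : (T.incl S.ind * (e * T.incl S.eP * e)) * e
        = T.incl S.ind * (e * T.incl S.eP * e) := by
      rw [mul_assoc, hte]
    have h3 : (T.incl S.ind * (e * T.incl S.eP * e))
        * (T.incl S.ind * (e * T.incl S.eP * e))
        = T.incl S.ind * (e * T.incl S.eP * e) := by
      calc (T.incl S.ind * (e * T.incl S.eP * e))
          * (T.incl S.ind * (e * T.incl S.eP * e))
          = T.incl S.ind * (((e * T.incl S.eP * e) * T.incl S.ind)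
            * (e * T.incl S.eP * e)) := by noncomm_ring
        _ = T.incl S.ind * ((T.incl S.ind * (e * T.incl S.eP * e))
            * (e * T.incl S.eP * e)) := by rw [← hcind (e * T.incl S.eP * e)]
        _ = T.incl S.ind * (T.incl S.ind * ((e * T.incl S.eP * e)
            * (e * T.incl S.eP * e))) := by noncomm_ring
        _ = T.incl S.ind * (T.incl S.ind * (T.incl S.indInv
            * (e * T.incl S.eP * e))) := by rw [htt]
        _ = T.incl S.ind * ((T.incl S.ind * T.incl S.indInv)
            * (e * T.incl S.eP * e)) := by noncomm_ring
        _ = T.incl S.ind * (e * T.incl S.eP * e) := by rw [hii1, one_mul]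
    rw [expand, he_idem, h1, h2, h3]
    abel
  -- `Ê^∞` of `pseq` is null
  have hHp : ∀ n, S.Ehat (pseq n) = b n - b n * b n := by
    intro n
    have h1 : pseq n = b n - (S.ind * b n) * S.eP * b n := by
      show b n - S.ind * (b n * S.eP * b n) = _
      noncomm_ring
    rw [h1, hHsub, S.Ehat_fix _ (hbA n),
      S.Ehat_eP _ (S.A.mul_mem (S.le S.ind_mem) (hbA n)) _ (hbA n)]
    congr 1
    calc S.indInv * (S.ind * b n * b n) = S.indInv * (S.ind * (b n * b n)) := by
          noncomm_ring
      _ = b n * b n := S.indInv_cancel _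
  have hHpB : IsBddSeq (fun n => S.Ehat (pseq n)) := bdd_comp6 S.Ehat_norm hpB
  have hqHp : T.q (fun n => S.Ehat (pseq n)) = 0 := by
    have hfun : (fun n => S.Ehat (pseq n)) = fun n => b n - b n * b n := funext hHp
    rw [hfun, T.q_sub' hbB (bdd_mul hbB hbB), ← T.q_mul' hbB hbB, hqb, he_idem,
      sub_self]
  have htendHp := (T.q_eq_zero_iff _ hHpB).mp hqHp
  set wseq : ℕ → B := fun n => star (pseq n) * pseq n with hwseq
  have hwB : IsBddSeq wseq := bdd_mul (bdd_star hpB) hpB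
  have hqpw : T.q pseq = T.q wseq := by
    have h2 : T.q wseq = star (T.q pseq) * T.q pseq := by
      calc T.q wseq = T.q (fun n => star (pseq n)) * T.q pseq :=
            (T.q_mul' (bdd_star hpB) hpB).symm
        _ = star (T.q pseq) * T.q pseq := by rw [T.q_star' hpB]
    rw [h2, hqp, hp_star, hp_idem]
  have htpw := T.tendsto_of_q_eq hpB hwB hqpw
  have hHw : Filter.Tendsto (fun n => ‖S.Ehat (wseq n)‖) Filter.atTop (nhds 0) := by
    apply squeeze_zero (g := fun n => 6 * ‖pseq n - wseq n‖ + ‖S.Ehat (pseq n)‖)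
      (fun n => norm_nonneg _)
    · intro n
      have h1 : S.Ehat (wseq n) = S.Ehat (wseq n - pseq n) + S.Ehat (pseq n) := by
        rw [hHsub, sub_add_cancel]
      rw [h1]
      refine (norm_add_le _ _).trans (add_le_add ?_ le_rfl)
      refine (S.Ehat_norm _).trans ?_
      rw [norm_sub_rev]
    · simpa using (htpw.const_mul 6).add htendHp
  have hwtend : Filter.Tendsto (fun n => ‖wseq n‖) Filter.atTop (nhds 0) := by
    apply squeeze_zero (g := fun n => CH * ‖S.Ehat (wseq n)‖) (fun n => norm_nonneg _)
    · intro n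
      exact hppH _ (star_mul_self_nonneg _)
    · simpa using hHw.const_mul CH
  have hptend : Filter.Tendsto (fun n => ‖pseq n‖) Filter.atTop (nhds 0) := by
    apply squeeze_zero (g := fun n => ‖pseq n - wseq n‖ + ‖wseq n‖)
      (fun n => norm_nonneg _)
    · intro n
      calc ‖pseq n‖ = ‖(pseq n - wseq n) + wseq n‖ := by rw [sub_add_cancel]
        _ ≤ _ := norm_add_le _ _
    · simpa using htpw.add hwtend
  have hqpz : T.q pseq = 0 := T.q_eq_zero_of_tendsto hpB hptend
  have hIe : e = T.incl S.ind * (e * T.incl S.eP * e) := by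
    have h0 : e - T.incl S.ind * (e * T.incl S.eP * e) = 0 := by
      rw [← hqp, hqpz]
    exact sub_eq_zero.mp h0
  -- Part B: per-element arguments
  intro x hx
  obtain ⟨a, haB, haA0, hqa⟩ := hx
  have haA : ∀ n, a n ∈ S.A := haA0
  have habB : IsBddSeq (fun n => a n * b n) := bdd_mul haB hbB
  have habA : ∀ n, a n * b n ∈ S.A := fun n => S.A.mul_mem (haA n) (hbA n)
  have hxe : x * e = T.q (fun n => a n * b n) := by
    rw [← hqa, ← hqb, T.q_mul' haB hbB]
  have hEabB : IsBddSeq (fun n => S.E (a n * b n)) := bdd_comp6 S.E_norm habB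
  have hm : Einf (x * e) = T.q (fun n => S.E (a n * b n)) := by
    rw [hxe, hEinf _ habB]
  set yseq : ℕ → B := fun n => S.ind * S.E (a n * b n) with hyseq
  have hyB : IsBddSeq yseq := bdd_mul (bdd_const _) hEabB
  have hymem : ∀ n, yseq n ∈ S.P :=
    fun n => S.P.mul_mem S.ind_mem (S.E_mem _ (habA n))
  have hqy : T.q yseq = T.incl S.ind * Einf (x * e) := by
    rw [hm]
    exact (T.q_mul' (bdd_const _) hEabB).symm
  set dseq : ℕ → B := fun n => a n * b n - yseq n * b n with hdseq
  have hdB : IsBddSeq dseq := bdd_sub habB (bdd_mul hyB hbB)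
  have hdA : ∀ n, dseq n ∈ S.A :=
    fun n => S.A.sub_mem (habA n) (S.A.mul_mem (S.le (hymem n)) (hbA n))
  have hqd : T.q dseq = x * e - (T.incl S.ind * Einf (x * e)) * e := by
    calc T.q dseq = T.q (fun n => a n * b n) - T.q (fun n => yseq n * b n) :=
          T.q_sub' habB (bdd_mul hyB hbB)
      _ = x * e - (T.incl S.ind * Einf (x * e)) * e := by
          rw [← hxe, ← T.q_mul' hyB hbB, hqy, hqb]
  -- `E^∞ d = 0`
  have hEd : ∀ n, S.E (dseq n) = S.E (a n * b n) - yseq n * S.E (b n) := by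
    intro n
    show S.E (a n * b n - yseq n * b n) = _
    rw [hEsub, S.E_p_mul (hymem n) (b n)]
  have hEdB : IsBddSeq (fun n => S.E (dseq n)) := bdd_comp6 S.E_norm hdB
  have hqEd : T.q (fun n => S.E (dseq n)) = 0 := by
    have hfun : (fun n => S.E (dseq n))
        = fun n => S.E (a n * b n) - yseq n * S.E (b n) := funext hEd
    rw [hfun, T.q_sub' hEabB (bdd_mul hyB hbEB), ← T.q_mul' hyB hbEB, hqEb]
    have h1 : T.q yseq * T.incl S.indInv = T.q (fun n => S.E (a n * b n)) := by
      rw [hqy, hm, mul_assoc, ← hcinv (T.q fun n => S.E (a n * b n)), ← mul_assoc,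
        hii1, one_mul]
    rw [h1, sub_self]
  -- compression of `d`
  have hF3 : T.incl S.eP * T.q dseq * T.incl S.eP = 0 := by
    have h1 : T.incl S.eP * T.q dseq = T.q (fun n => S.eP * dseq n) := by
      rw [SeqAlg.incl, T.q_mul' (bdd_const _) hdB]
    have h2 : T.incl S.eP * T.q dseq * T.incl S.eP
        = T.q (fun n => S.eP * dseq n * S.eP) := by
      rw [h1, SeqAlg.incl, T.q_mul' (bdd_mul (bdd_const _) hdB) (bdd_const _)]
    rw [h2]
    have hfun : (fun n => S.eP * dseq n * S.eP) = fun n => S.E (dseq n) * S.eP := by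
      funext n; exact S.eP_conj _ (hdA n)
    rw [hfun, ← T.q_mul' hEdB (bdd_const _), hqEd, zero_mul]
  have hde : T.q dseq * e = T.q dseq := by
    rw [hqd, sub_mul, mul_assoc (x) e e, he_idem,
      mul_assoc (T.incl S.ind * Einf (x * e)) e e, he_idem]
  -- `d = ind · (d e_P e)`
  have hF5 : T.q dseq = T.incl S.ind * (T.q dseq * T.incl S.eP * e) := by
    calc T.q dseq = T.q dseq * e := hde.symm
      _ = T.q dseq * (T.incl S.ind * (e * T.incl S.eP * e)) := by
          conv_lhs => rw [hIe]
      _ = (T.q dseq * T.incl S.ind) * (e * T.incl S.eP * e) := by rw [← mul_assoc]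
      _ = (T.incl S.ind * T.q dseq) * (e * T.incl S.eP * e) := by
          rw [← hcind (T.q dseq)]
      _ = T.incl S.ind * ((T.q dseq * e) * T.incl S.eP * e) := by noncomm_ring
      _ = T.incl S.ind * (T.q dseq * T.incl S.eP * e) := by rw [hde]
  -- `d d* = ind · (d e_P d*)`
  have hF6 : T.q dseq * star (T.q dseq)
      = T.incl S.ind * (T.q dseq * T.incl S.eP * star (T.q dseq)) := by
    have hstar5 : star (T.incl S.ind * (T.q dseq * T.incl S.eP * e))
        = (e * (T.incl S.eP * star (T.q dseq))) * T.incl S.ind := by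
      simp only [star_mul, he_star, hsteP, hstind]
      try noncomm_ring
    calc T.q dseq * star (T.q dseq)
        = (T.incl S.ind * (T.q dseq * T.incl S.eP * e))
          * star (T.incl S.ind * (T.q dseq * T.incl S.eP * e)) := by rw [← hF5]
      _ = (T.incl S.ind * (T.q dseq * T.incl S.eP * e))
          * ((e * (T.incl S.eP * star (T.q dseq))) * T.incl S.ind) := by rw [hstar5]
      _ = ((T.incl S.ind * (T.q dseq * T.incl S.eP * e))
          * (e * (T.incl S.eP * star (T.q dseq)))) * T.incl S.ind := by
          rw [← mul_assoc]
      _ = T.incl S.ind * ((T.incl S.ind * (T.q dseq * T.incl S.eP * e))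
          * (e * (T.incl S.eP * star (T.q dseq)))) := by
          rw [← hcind ((T.incl S.ind * (T.q dseq * T.incl S.eP * e))
            * (e * (T.incl S.eP * star (T.q dseq))))]
      _ = T.incl S.ind * (T.incl S.ind * (T.q dseq
          * (T.incl S.eP * (e * e) * T.incl S.eP) * star (T.q dseq))) := by
          noncomm_ring
      _ = T.incl S.ind * (T.incl S.ind * (T.q dseq
          * (T.incl S.indInv * T.incl S.eP) * star (T.q dseq))) := by
          rw [he_idem, hI1]
      _ = T.incl S.ind * (T.incl S.ind * (T.incl S.indInv
          * (T.q dseq * T.incl S.eP * star (T.q dseq)))) := by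
          have h1 : T.q dseq * (T.incl S.indInv * T.incl S.eP) * star (T.q dseq)
              = (T.q dseq * T.incl S.indInv)
                * (T.incl S.eP * star (T.q dseq)) := by noncomm_ring
          rw [h1, ← hcinv (T.q dseq)]
          noncomm_ring
      _ = T.incl S.ind * (T.q dseq * T.incl S.eP * star (T.q dseq)) := by
          rw [← mul_assoc (T.incl S.ind) (T.incl S.indInv), hii1, one_mul]
  -- compression of `d d*` vanishes
  have hF7 : T.incl S.eP * (T.q dseq * star (T.q dseq)) * T.incl S.eP = 0 := by
    rw [hF6]
    have h1 : T.incl S.eP * (T.incl S.ind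
        * (T.q dseq * T.incl S.eP * star (T.q dseq)))
        = T.incl S.ind * (T.incl S.eP
          * (T.q dseq * T.incl S.eP * star (T.q dseq))) := by
      rw [← mul_assoc, ← hcind (T.incl S.eP), mul_assoc]
    rw [h1]
    have h2 : T.incl S.ind * (T.incl S.eP * (T.q dseq * T.incl S.eP
        * star (T.q dseq))) * T.incl S.eP
        = T.incl S.ind * ((T.incl S.eP * T.q dseq * T.incl S.eP)
          * (star (T.q dseq) * T.incl S.eP)) := by noncomm_ring
    rw [h2, hF3, zero_mul, mul_zero]
  set ddseq : ℕ → B := fun n => dseq n * star (dseq n) with hddseq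
  have hddB : IsBddSeq ddseq := bdd_mul hdB (bdd_star hdB)
  have hddA : ∀ n, ddseq n ∈ S.A := fun n => mul_mem (hdA n) (star_mem (hdA n))
  have hqdd : T.q ddseq = T.q dseq * star (T.q dseq) := by
    rw [T.q_star' hdB]
    exact (T.q_mul' hdB (bdd_star hdB)).symm
  have hEddB : IsBddSeq (fun n => S.E (ddseq n)) := bdd_comp6 S.E_norm hddB
  have hcomp : T.incl S.eP * (T.q dseq * star (T.q dseq)) * T.incl S.eP
      = T.q (fun n => S.E (ddseq n)) * T.incl S.eP := by
    have h1 : T.incl S.eP * (T.q dseq * star (T.q dseq)) * T.incl S.eP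
        = T.q (fun n => S.eP * ddseq n * S.eP) := by
      rw [← hqdd, SeqAlg.incl, T.q_mul' (bdd_const _) hddB,
        T.q_mul' (bdd_mul (bdd_const _) hddB) (bdd_const _)]
    rw [h1]
    have hfun : (fun n => S.eP * ddseq n * S.eP) = fun n => S.E (ddseq n) * S.eP := by
      funext n; exact S.eP_conj _ (hddA n)
    rw [hfun, ← T.q_mul' hEddB (bdd_const _)]
    rfl
  have hqEdd_eP : T.q (fun n => S.E (ddseq n) * S.eP) = 0 := by
    rw [← T.q_mul' hEddB (bdd_const _)]
    calc T.q (fun n => S.E (ddseq n)) * T.q (fun _ => S.eP)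
        = T.incl S.eP * (T.q dseq * star (T.q dseq)) * T.incl S.eP := hcomp.symm
      _ = 0 := hF7
  have htEdd : Filter.Tendsto (fun n => ‖S.E (ddseq n) * S.eP‖) Filter.atTop (nhds 0) :=
    (T.q_eq_zero_iff _ (bdd_mul hEddB (bdd_const _))).mp hqEdd_eP
  have hEdd0 : Filter.Tendsto (fun n => ‖S.E (ddseq n)‖) Filter.atTop (nhds 0) := by
    apply squeeze_zero (g := fun n => ‖S.ind‖ * (6 * ‖S.E (ddseq n) * S.eP‖))
      (fun n => norm_nonneg _)
    · intro n
      have hmemA : S.E (ddseq n) ∈ S.A := S.le (S.E_mem _ (hddA n))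
      have h1 : S.Ehat (S.E (ddseq n) * S.eP) = S.indInv * S.E (ddseq n) := by
        have h := S.Ehat_eP _ hmemA 1 S.A.one_mem
        rwa [mul_one, mul_one] at h
      calc ‖S.E (ddseq n)‖ = ‖S.ind * (S.indInv * S.E (ddseq n))‖ := by
            rw [S.ind_cancel]
        _ ≤ ‖S.ind‖ * ‖S.indInv * S.E (ddseq n)‖ := norm_mul_le _ _
        _ = ‖S.ind‖ * ‖S.Ehat (S.E (ddseq n) * S.eP)‖ := by rw [h1]
        _ ≤ ‖S.ind‖ * (6 * ‖S.E (ddseq n) * S.eP‖) :=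
            mul_le_mul_of_nonneg_left (S.Ehat_norm _) (norm_nonneg _)
    · simpa using (htEdd.const_mul 6).const_mul ‖S.ind‖
  have hdd0 : Filter.Tendsto (fun n => ‖ddseq n‖) Filter.atTop (nhds 0) := by
    apply squeeze_zero (g := fun n => CE * ‖S.E (ddseq n)‖) (fun n => norm_nonneg _)
    · intro n
      refine hppE _ (hddA n) ?_
      have h1 : ddseq n = star (star (dseq n)) * star (dseq n) := by
        show dseq n * star (dseq n) = _
        rw [star_star]
      rw [h1]
      exact star_mul_self_nonneg _
    · simpa using hEdd0.const_mul CE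
  have hd0 : Filter.Tendsto (fun n => ‖dseq n‖) Filter.atTop (nhds 0) := by
    have h1 : ∀ n, ‖dseq n‖ = Real.sqrt ‖ddseq n‖ := by
      intro n
      show _ = Real.sqrt ‖dseq n * star (dseq n)‖
      rw [CStarRing.norm_self_mul_star, Real.sqrt_mul_self (norm_nonneg _)]
    have h2 := (Real.continuous_sqrt.tendsto 0).comp hdd0
    rw [Real.sqrt_zero] at h2
    exact h2.congr fun n => (h1 n).symm
  have hqd0 : T.q dseq = 0 := T.q_eq_zero_of_tendsto hdB hd0
  have hpart2 : x * e = (T.incl S.ind * Einf (x * e)) * e := by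
    have h0 : x * e - (T.incl S.ind * Einf (x * e)) * e = 0 := by
      rw [← hqd, hqd0]
    exact sub_eq_zero.mp h0
  refine ⟨⟨yseq, hyB, fun n => hymem n, hqy⟩, hpart2, ?_⟩
  -- uniqueness
  intro y' hy' heq
  obtain ⟨c, hcB, hcP0, hqc⟩ := hy'
  have hcP : ∀ n, c n ∈ S.P := hcP0
  have hcbB : IsBddSeq (fun n => c n * b n) := bdd_mul hcB hbB
  have hye : y' * e = T.q (fun n => c n * b n) := by
    rw [← hqc, ← hqb, T.q_mul' hcB hbB]
  have hEye : Einf (y' * e) = y' * T.incl S.indInv := by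
    rw [hye, hEinf _ hcbB]
    have hfun : (fun n => S.E (c n * b n)) = fun n => c n * S.E (b n) := by
      funext n; exact S.E_p_mul (hcP n) (b n)
    rw [hfun, ← T.q_mul' hcB hbEB, hqc, hqEb]
  rw [heq] at hm
  have hEye2 : Einf (x * e) = y' * T.incl S.indInv := by
    rw [heq, hEye]
  rw [hEye2, ← mul_assoc, hcind y', mul_assoc, hii1, mul_one]
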